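/- Let (Z_n) be a Galton-Watson process with Z_0 = 1 and offspring distribution with mean m ≠ 1 and variance s². Then the partial sum T_R = ∑_{n=0}^{R} Z_n satisfies E(T_R²) = (s²/(1-m)²)·((1 - m^{2R+1})/(1-m) - (2R+1)·m^R) + ((1 - m^{R+1})/(1-m))². -/

import Mathlib

open MeasureTheory ProbabilityTheory


open MeasureTheory ProbabilityTheory

namespace GWaux

open scoped ENNReal

/-- tsum of an `if i < z` function is a range sum. -/
lemma tsum_ite_lt (z : ℕ) (f : ℕ → ℝ≥0∞) :
    ∑' i, (if i < z then f i else 0) = ∑ i ∈ Finset.range z, f i := by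
  rw [tsum_eq_sum (s := Finset.range z) (fun i hi => if_neg (by simpa using hi))]
  exact Finset.sum_congr rfl fun i hi => if_pos (Finset.mem_range.mp hi)

lemma tsum_ite_lt_one (z : ℕ) :
    ∑' i, (if i < z then (1 : ℝ≥0∞) else 0) = (z : ℝ≥0∞) := by
  rw [tsum_ite_lt z (fun _ => 1)]; simp

lemma tsum_ite_offDiag (z : ℕ) (f : ℕ × ℕ → ℝ≥0∞) :
    ∑' p : ℕ × ℕ, (if p.1 ≠ p.2 ∧ p.1 < z ∧ p.2 < z then f p else 0)
      = ∑ p ∈ (Finset.range z).offDiag, f p := by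
  rw [tsum_eq_sum (s := (Finset.range z).offDiag) (fun p hp => if_neg (by
    simp only [Finset.mem_offDiag, Finset.mem_range] at hp; tauto))]
  refine Finset.sum_congr rfl fun p hp => if_pos ?_
  simp only [Finset.mem_offDiag, Finset.mem_range] at hp
  tauto

lemma tsum_ite_offDiag_one (z : ℕ) :
    ∑' p : ℕ × ℕ, (if p.1 ≠ p.2 ∧ p.1 < z ∧ p.2 < z then (1 : ℝ≥0∞) else 0)
      = ((z * (z - 1) : ℕ) : ℝ≥0∞) := by
  rw [tsum_ite_offDiag z (fun _ => 1)]
  simp only [Finset.sum_const, Finset.offDiag_card, Finset.card_range, nsmul_eq_mul, mul_one]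
  congr 1
  cases z with
  | zero => simp
  | succ k => rw [Nat.succ_sub_one, Nat.mul_succ, Nat.succ_mul]; omega

/-- square of a range sum, split into diagonal and off-diagonal parts. -/
lemma sq_sum_split (z : ℕ) (f : ℕ → ℝ≥0∞) :
    (∑ i ∈ Finset.range z, f i) ^ 2
      = ∑ i ∈ Finset.range z, (f i) ^ 2
        + ∑ p ∈ (Finset.range z).offDiag, f p.1 * f p.2 := by
  have hdiag : (Finset.range z).diag = (Finset.range z).image (fun a => (a, a)) := by
    ext ⟨a, b⟩
    simp only [Finset.mem_diag, Finset.mem_image, Finset.mem_range]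
    constructor
    · rintro ⟨h1, rfl⟩; exact ⟨a, h1, rfl⟩
    · rintro ⟨c, hc, h⟩; cases h; exact ⟨hc, rfl⟩
  rw [sq, Finset.sum_mul_sum, ← Finset.sum_product', ← Finset.diag_union_offDiag,
    Finset.sum_union (Finset.disjoint_diag_offDiag _), hdiag,
    Finset.sum_image (fun x _ y _ h => (Prod.mk.inj h).1)]
  simp [sq]

end GWaux

namespace GWaux

open MeasureTheory ProbabilityTheory
open scoped ENNReal

variable {Ω : Type*}

/-- σ-algebra generated by a set of the ξ's. -/
def gwS (ξ : ℕ → ℕ → Ω → ℕ) (T : Set (ℕ × ℕ)) : MeasurableSpace Ω :=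
  ⨆ q ∈ T, MeasurableSpace.comap (fun ω => ξ q.1 q.2 ω) ⊤

lemma meas_sum_range {m : MeasurableSpace Ω} (x : ℕ → Ω → ℕ) (hx : ∀ i, Measurable (x i))
    {N : Ω → ℕ} (hN : Measurable N) :
    Measurable fun ω => ∑ i ∈ Finset.range (N ω), x i ω := by
  have hF : Measurable (fun p : Ω × ℕ => ∑ i ∈ Finset.range p.2, x i p.1) :=
    measurable_from_prod_countable_left fun j => Finset.measurable_sum (Finset.range j) fun i _ => hx i
  exact hF.comp (measurable_id.prodMk hN)

variable [MeasurableSpace Ω] {P : Measure Ω} [IsProbabilityMeasure P]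
  {ξ : ℕ → ℕ → Ω → ℕ} {Z : ℕ → Ω → ℕ}

lemma gwS_le (hξmeas : ∀ n i, Measurable (ξ n i)) (T : Set (ℕ × ℕ)) :
    gwS ξ T ≤ ‹MeasurableSpace Ω› :=
  iSup₂_le fun q _ => (hξmeas q.1 q.2).comap_le

lemma gwS_mono {T₁ T₂ : Set (ℕ × ℕ)} (h : T₁ ⊆ T₂) : gwS ξ T₁ ≤ gwS ξ T₂ :=
  biSup_mono h

lemma gw_xi_meas {T : Set (ℕ × ℕ)} {q : ℕ × ℕ} (hq : q ∈ T) :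
    Measurable[gwS ξ T] (fun ω => ξ q.1 q.2 ω) :=
  Measurable.of_comap_le
    (le_biSup (fun q : ℕ × ℕ => MeasurableSpace.comap (fun ω => ξ q.1 q.2 ω)
      (⊤ : MeasurableSpace ℕ)) hq)

lemma gw_Zmeas (hξmeas : ∀ n i, Measurable (ξ n i)) (hZ0 : ∀ ω, Z 0 ω = 1)
    (hZrec : ∀ n ω, Z (n + 1) ω = ∑ i ∈ Finset.range (Z n ω), ξ n i ω)
    (n : ℕ) : ∀ k, k ≤ n → Measurable[gwS ξ {p : ℕ × ℕ | p.1 < n}] (Z k) := by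
  intro k
  induction k with
  | zero =>
    intro _
    have h : Z 0 = fun _ => 1 := funext hZ0
    rw [h]; exact measurable_const
  | succ k ih =>
    intro hk
    have hZk := ih (Nat.le_of_succ_le hk)
    have hxi : ∀ i, Measurable[gwS ξ {p : ℕ × ℕ | p.1 < n}] (ξ k i) := fun i =>
      gw_xi_meas (q := (k, i)) (Nat.lt_of_succ_le hk)
    have h : Z (k + 1) = fun ω => ∑ i ∈ Finset.range (Z k ω), ξ k i ω := funext (hZrec k)
    rw [h]
    exact meas_sum_range _ hxi hZk

lemma gw_Zmeas_glob (hξmeas : ∀ n i, Measurable (ξ n i)) (hZ0 : ∀ ω, Z 0 ω = 1)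
    (hZrec : ∀ n ω, Z (n + 1) ω = ∑ i ∈ Finset.range (Z n ω), ξ n i ω)
    (k : ℕ) : Measurable (Z k) :=
  (gw_Zmeas hξmeas hZ0 hZrec k k le_rfl).mono (gwS_le hξmeas _) le_rfl

lemma gw_factor (hξmeas : ∀ n i, Measurable (ξ n i))
    (hξindep : iIndepFun (fun q : ℕ × ℕ => ξ q.1 q.2) P)
    {T : Set (ℕ × ℕ)} {n i : ℕ} (hni : ((n, i) : ℕ × ℕ) ∉ T)
    (g : ℕ → ℝ≥0∞) {Y : Ω → ℝ≥0∞} (hY : Measurable[gwS ξ T] Y) :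
    ∫⁻ ω, g (ξ n i ω) * Y ω ∂P = (∫⁻ ω, g (ξ n i ω) ∂P) * ∫⁻ ω, Y ω ∂P := by
  have hind : Indep (MeasurableSpace.comap (fun ω => ξ n i ω) ⊤) (gwS ξ T) P := by
    have h := hξindep.iIndep
    have h2 := indep_iSup_of_disjoint (fun q : ℕ × ℕ => (hξmeas q.1 q.2).comap_le) h
      (Set.disjoint_singleton_left.mpr hni)
    simp only [iSup_singleton] at h2; exact h2
  exact lintegral_mul_eq_lintegral_mul_lintegral_of_independent_measurableSpace
    (hξmeas n i).comap_le (gwS_le hξmeas T) hind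
    (measurable_from_top.comp (Measurable.of_comap_le le_rfl)) hY

lemma gw_ident (hξmeas : ∀ n i, Measurable (ξ n i))
    (hξident : ∀ n i, Measure.map (ξ n i) P = Measure.map (ξ 0 0) P)
    (g : ℕ → ℝ≥0∞) (n i : ℕ) :
    ∫⁻ ω, g (ξ n i ω) ∂P = ∫⁻ ω, g (ξ 0 0 ω) ∂P := by
  rw [← lintegral_map measurable_from_top (hξmeas n i), hξident n i,
    lintegral_map measurable_from_top (hξmeas 0 0)]

end GWaux

namespace GWaux

open MeasureTheory ProbabilityTheory
open scoped ENNReal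

variable {Ω : Type*} [MeasurableSpace Ω] {P : Measure Ω} [IsProbabilityMeasure P]
  {ξ : ℕ → ℕ → Ω → ℕ} {Z : ℕ → Ω → ℕ}

lemma gw_step (hξmeas : ∀ n i, Measurable (ξ n i))
    (hξident : ∀ n i, Measure.map (ξ n i) P = Measure.map (ξ 0 0) P)
    (hξindep : iIndepFun (fun q : ℕ × ℕ => ξ q.1 q.2) P)
    (hZ0 : ∀ ω, Z 0 ω = 1)
    (hZrec : ∀ n ω, Z (n + 1) ω = ∑ i ∈ Finset.range (Z n ω), ξ n i ω)
    (n : ℕ) {Y : Ω → ℝ≥0∞} (hY : Measurable[gwS ξ {p : ℕ × ℕ | p.1 < n}] Y) :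
    ∫⁻ ω, Y ω * ((Z (n + 1) ω : ℕ) : ℝ≥0∞) ∂P
      = (∫⁻ ω, ((ξ 0 0 ω : ℕ) : ℝ≥0∞) ∂P) * ∫⁻ ω, Y ω * ((Z n ω : ℕ) : ℝ≥0∞) ∂P := by
  have hGle := gwS_le hξmeas {p : ℕ × ℕ | p.1 < n}
  have hYm : Measurable Y := hY.mono hGle le_rfl
  have hZnG : Measurable[gwS ξ {p : ℕ × ℕ | p.1 < n}] (Z n) :=
    gw_Zmeas hξmeas hZ0 hZrec n n le_rfl
  set ind : ℕ → Ω → ℝ≥0∞ := fun i ω => if i < Z n ω then 1 else 0 with hind_def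
  have hindG : ∀ i, Measurable[gwS ξ {p : ℕ × ℕ | p.1 < n}] (ind i) := fun i =>
    Measurable.ite (hZnG .of_discrete) measurable_const measurable_const
  have hindm : ∀ i, Measurable (ind i) := fun i => (hindG i).mono hGle le_rfl
  have hterm : ∀ i, Measurable fun ω =>
      (fun a : ℕ => (a : ℝ≥0∞)) (ξ n i ω) * (Y ω * ind i ω) := fun i =>
    (measurable_from_top.comp (hξmeas n i)).mul (hYm.mul (hindm i))
  calc ∫⁻ ω, Y ω * ((Z (n + 1) ω : ℕ) : ℝ≥0∞) ∂P
      = ∫⁻ ω, ∑' i, (fun a : ℕ => (a : ℝ≥0∞)) (ξ n i ω) * (Y ω * ind i ω) ∂P := by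
        refine lintegral_congr fun ω => ?_
        rw [hZrec n ω, Nat.cast_sum, ← tsum_ite_lt (Z n ω)
          (fun i => ((ξ n i ω : ℕ) : ℝ≥0∞)), ← ENNReal.tsum_mul_left]
        refine tsum_congr fun i => ?_
        by_cases h : i < Z n ω <;> simp [ind, h] <;> ring
    _ = ∑' i, ∫⁻ ω, (fun a : ℕ => (a : ℝ≥0∞)) (ξ n i ω) * (Y ω * ind i ω) ∂P :=
        lintegral_tsum fun i => (hterm i).aemeasurable
    _ = ∑' i, (∫⁻ ω, ((ξ 0 0 ω : ℕ) : ℝ≥0∞) ∂P) * ∫⁻ ω, Y ω * ind i ω ∂P := by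
        refine tsum_congr fun i => ?_
        rw [gw_factor hξmeas hξindep (by simp) (fun a : ℕ => (a : ℝ≥0∞))
          (Y := fun ω => Y ω * ind i ω) (hY.mul (hindG i)), gw_ident hξmeas hξident (fun a : ℕ => (a : ℝ≥0∞)) n i]
    _ = (∫⁻ ω, ((ξ 0 0 ω : ℕ) : ℝ≥0∞) ∂P) * ∑' i, ∫⁻ ω, Y ω * ind i ω ∂P :=
        ENNReal.tsum_mul_left
    _ = (∫⁻ ω, ((ξ 0 0 ω : ℕ) : ℝ≥0∞) ∂P) * ∫⁻ ω, Y ω * ((Z n ω : ℕ) : ℝ≥0∞) ∂P := by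
        congr 1
        rw [← lintegral_tsum (f := fun i ω => Y ω * ind i ω) fun i => (hYm.mul (hindm i)).aemeasurable]
        refine lintegral_congr fun ω => ?_
        rw [ENNReal.tsum_mul_left, tsum_ite_lt_one]

end GWaux

namespace GWaux

open MeasureTheory ProbabilityTheory
open scoped ENNReal

variable {Ω : Type*} [MeasurableSpace Ω] {P : Measure Ω} [IsProbabilityMeasure P]
  {ξ : ℕ → ℕ → Ω → ℕ} {Z : ℕ → Ω → ℕ}

lemma gw_sqstep (hξmeas : ∀ n i, Measurable (ξ n i))
    (hξident : ∀ n i, Measure.map (ξ n i) P = Measure.map (ξ 0 0) P)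
    (hξindep : iIndepFun (fun q : ℕ × ℕ => ξ q.1 q.2) P)
    (hZ0 : ∀ ω, Z 0 ω = 1)
    (hZrec : ∀ n ω, Z (n + 1) ω = ∑ i ∈ Finset.range (Z n ω), ξ n i ω)
    (n : ℕ) :
    ∫⁻ ω, ((Z (n + 1) ω : ℕ) : ℝ≥0∞) ^ 2 ∂P
      = (∫⁻ ω, ((ξ 0 0 ω : ℕ) : ℝ≥0∞) ^ 2 ∂P) * ∫⁻ ω, ((Z n ω : ℕ) : ℝ≥0∞) ∂P
        + (∫⁻ ω, ((ξ 0 0 ω : ℕ) : ℝ≥0∞) ∂P) ^ 2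
          * ∫⁻ ω, ((Z n ω * (Z n ω - 1) : ℕ) : ℝ≥0∞) ∂P := by
  have hGle := gwS_le hξmeas {p : ℕ × ℕ | p.1 < n}
  have hZnG : Measurable[gwS ξ {p : ℕ × ℕ | p.1 < n}] (Z n) :=
    gw_Zmeas hξmeas hZ0 hZrec n n le_rfl
  have hZnm : Measurable (Z n) := hZnG.mono hGle le_rfl
  set A : ℕ → Ω → ℝ≥0∞ :=
    fun i ω => if i < Z n ω then ((ξ n i ω : ℕ) : ℝ≥0∞) ^ 2 else 0 with hA_def
  set B : ℕ × ℕ → Ω → ℝ≥0∞ := fun p ω =>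
    if p.1 ≠ p.2 ∧ p.1 < Z n ω ∧ p.2 < Z n ω
    then ((ξ n p.1 ω : ℕ) : ℝ≥0∞) * ((ξ n p.2 ω : ℕ) : ℝ≥0∞) else 0 with hB_def
  set C : ℕ × ℕ → Ω → ℝ≥0∞ := fun p ω =>
    if p.1 ≠ p.2 ∧ p.1 < Z n ω ∧ p.2 < Z n ω then 1 else 0 with hC_def
  set ind : ℕ → Ω → ℝ≥0∞ := fun i ω => if i < Z n ω then 1 else 0 with hind_def
  have hindG : ∀ i, Measurable[gwS ξ {p : ℕ × ℕ | p.1 < n}] (ind i) := fun i =>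
    Measurable.ite (hZnG .of_discrete) measurable_const measurable_const
  have hindm : ∀ i, Measurable (ind i) := fun i => (hindG i).mono hGle le_rfl
  have hCsetG : ∀ p : ℕ × ℕ,
      MeasurableSet[gwS ξ {q : ℕ × ℕ | q.1 < n}]
        {ω | p.1 ≠ p.2 ∧ p.1 < Z n ω ∧ p.2 < Z n ω} := fun p => by
    have h : {ω | p.1 ≠ p.2 ∧ p.1 < Z n ω ∧ p.2 < Z n ω}
        = Z n ⁻¹' {z | p.1 ≠ p.2 ∧ p.1 < z ∧ p.2 < z} := rfl
    rw [h]; exact hZnG .of_discrete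
  have hCG : ∀ p, Measurable[gwS ξ {q : ℕ × ℕ | q.1 < n}] (C p) := fun p =>
    Measurable.ite (hCsetG p) measurable_const measurable_const
  have hCm : ∀ p, Measurable (C p) := fun p => (hCG p).mono hGle le_rfl
  have hAm : ∀ i, Measurable (A i) := fun i =>
    Measurable.ite (hZnm .of_discrete)
      ((measurable_from_top.comp (hξmeas n i)).pow_const 2) measurable_const
  have hBm : ∀ p, Measurable (B p) := fun p =>
    Measurable.ite (hZnm (MeasurableSet.of_discrete
        (s := {z | p.1 ≠ p.2 ∧ p.1 < z ∧ p.2 < z})))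
      (((measurable_from_top (f := fun a : ℕ => (a : ℝ≥0∞))).comp (hξmeas n p.1)).mul
        ((measurable_from_top (f := fun a : ℕ => (a : ℝ≥0∞))).comp (hξmeas n p.2))) measurable_const
  have claim : ∀ ω, ((Z (n + 1) ω : ℕ) : ℝ≥0∞) ^ 2
      = (∑' i, A i ω) + ∑' p : ℕ × ℕ, B p ω := fun ω => by
    rw [hZrec n ω, Nat.cast_sum, sq_sum_split,
      ← tsum_ite_lt (Z n ω) (fun i => ((ξ n i ω : ℕ) : ℝ≥0∞) ^ 2),
      ← tsum_ite_offDiag (Z n ω) (fun p => ((ξ n p.1 ω : ℕ) : ℝ≥0∞) * ((ξ n p.2 ω : ℕ) : ℝ≥0∞))]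
  have hAint : ∀ i, ∫⁻ ω, A i ω ∂P
      = (∫⁻ ω, ((ξ 0 0 ω : ℕ) : ℝ≥0∞) ^ 2 ∂P) * ∫⁻ ω, ind i ω ∂P := fun i => by
    have h : ∀ ω, A i ω = (fun a : ℕ => ((a : ℝ≥0∞)) ^ 2) (ξ n i ω) * ind i ω := fun ω => by
      by_cases h : i < Z n ω <;> simp [hA_def, hind_def, h]
    rw [lintegral_congr h, gw_factor hξmeas hξindep (by simp)
      (fun a : ℕ => ((a : ℝ≥0∞)) ^ 2) (hindG i),
      gw_ident hξmeas hξident (fun a : ℕ => ((a : ℝ≥0∞)) ^ 2) n i]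
  have hBint : ∀ p : ℕ × ℕ, ∫⁻ ω, B p ω ∂P
      = (∫⁻ ω, ((ξ 0 0 ω : ℕ) : ℝ≥0∞) ∂P) ^ 2 * ∫⁻ ω, C p ω ∂P := fun p => by
    by_cases hp : p.1 = p.2
    · have hB0 : ∀ ω, B p ω = 0 := fun ω => if_neg (by tauto)
      have hC0 : ∀ ω, C p ω = 0 := fun ω => if_neg (by tauto)
      rw [lintegral_congr hB0, lintegral_congr hC0]
      simp
    · have hrw : ∀ ω, B p ω = (fun a : ℕ => (a : ℝ≥0∞)) (ξ n p.1 ω)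
          * ((fun a : ℕ => (a : ℝ≥0∞)) (ξ n p.2 ω) * C p ω) := fun ω => by
        by_cases h1 : p.1 < Z n ω <;> by_cases h2 : p.2 < Z n ω <;>
          simp [hB_def, hC_def, hp, h1, h2]
      have hY2 : Measurable[gwS ξ ({q : ℕ × ℕ | q.1 < n} ∪ {(n, p.2)})]
          (fun ω => (fun a : ℕ => (a : ℝ≥0∞)) (ξ n p.2 ω) * C p ω) := by
        refine Measurable.mul ?_ ((hCG p).mono (gwS_mono Set.subset_union_left) le_rfl)
        exact measurable_from_top.comp
          (gw_xi_meas (q := (n, p.2)) (Set.mem_union_right _ rfl))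
      have hni : ((n, p.1) : ℕ × ℕ) ∉ ({q : ℕ × ℕ | q.1 < n} ∪ {(n, p.2)}) := by
        simp only [Set.mem_union, Set.mem_setOf_eq, Set.mem_singleton_iff, Prod.mk.injEq]
        push_neg
        exact ⟨le_rfl, fun _ => hp⟩
      rw [lintegral_congr hrw,
        gw_factor hξmeas hξindep hni (fun a : ℕ => (a : ℝ≥0∞)) hY2,
        gw_factor hξmeas hξindep (by simp) (fun a : ℕ => (a : ℝ≥0∞)) (hCG p),
        gw_ident hξmeas hξident (fun a : ℕ => (a : ℝ≥0∞)) n p.1,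
        gw_ident hξmeas hξident (fun a : ℕ => (a : ℝ≥0∞)) n p.2]
      ring
  calc ∫⁻ ω, ((Z (n + 1) ω : ℕ) : ℝ≥0∞) ^ 2 ∂P
      = ∫⁻ ω, ((∑' i, A i ω) + ∑' p : ℕ × ℕ, B p ω) ∂P := lintegral_congr claim
    _ = (∫⁻ ω, ∑' i, A i ω ∂P) + ∫⁻ ω, ∑' p : ℕ × ℕ, B p ω ∂P :=
        lintegral_add_left (Measurable.ennreal_tsum hAm) _
    _ = (∑' i, ∫⁻ ω, A i ω ∂P) + ∑' p : ℕ × ℕ, ∫⁻ ω, B p ω ∂P := by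
        rw [lintegral_tsum fun i => (hAm i).aemeasurable,
          lintegral_tsum fun p => (hBm p).aemeasurable]
    _ = (∫⁻ ω, ((ξ 0 0 ω : ℕ) : ℝ≥0∞) ^ 2 ∂P) * ∫⁻ ω, ((Z n ω : ℕ) : ℝ≥0∞) ∂P
        + (∫⁻ ω, ((ξ 0 0 ω : ℕ) : ℝ≥0∞) ∂P) ^ 2
          * ∫⁻ ω, ((Z n ω * (Z n ω - 1) : ℕ) : ℝ≥0∞) ∂P := by
        congr 1
        · rw [tsum_congr hAint, ENNReal.tsum_mul_left]
          congr 1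
          rw [← lintegral_tsum fun i => (hindm i).aemeasurable]
          exact lintegral_congr fun ω => tsum_ite_lt_one (Z n ω)
        · rw [tsum_congr hBint, ENNReal.tsum_mul_left]
          congr 1
          rw [← lintegral_tsum fun p => (hCm p).aemeasurable]
          exact lintegral_congr fun ω => tsum_ite_offDiag_one (Z n ω)

end GWaux

namespace GWaux

lemma gw_algebra (m s2 : ℝ) (hm1 : m ≠ 1) (hs2m : m = 0 → s2 = 0)
    (b t q : ℕ → ℝ) (hb0 : b 0 = 1) (ht0 : t 0 = 1) (hq0 : q 0 = 1)
    (hbrec : ∀ n, b (n + 1) = m ^ 2 * b n + s2 * m ^ n)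
    (htrec : ∀ n, t (n + 1) = m * t n + b (n + 1))
    (hqrec : ∀ n, q (n + 1) = q n + 2 * m * t n + b (n + 1)) :
    ∀ n, q n = s2 / (1 - m) ^ 2 * ((1 - m ^ (2 * n + 1)) / (1 - m) - (2 * (n : ℝ) + 1) * m ^ n)
        + ((1 - m ^ (n + 1)) / (1 - m)) ^ 2 := by
  by_cases hm0 : m = 0
  · have hs2 : s2 = 0 := hs2m hm0
    subst hm0; subst hs2
    have hq : ∀ n, q n = 1 := by
      intro n
      induction n with
      | zero => exact hq0
      | succ n ih => rw [hqrec, ih, hbrec]; ring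
    intro n
    rw [hq n]
    simp [zero_pow (Nat.succ_ne_zero n)]
  · have h1m : (1 : ℝ) - m ≠ 0 := sub_ne_zero.mpr (Ne.symm hm1)
    have hF : m * (1 - m) ^ 3 ≠ 0 := mul_ne_zero hm0 (pow_ne_zero 3 h1m)
    have hb' : ∀ n, b n * (m ^ 2 - m)
        = m ^ (2 * n) * (m ^ 2 - m) + s2 * (m ^ (2 * n) - m ^ n) := by
      intro n
      induction n with
      | zero => simp [hb0]
      | succ n ih => linear_combination (m ^ 2 - m) * hbrec n + m ^ 2 * ih
    have ht' : ∀ n, t n * ((m - 1) * (m ^ 2 - m))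
        = m ^ n * (m ^ (n + 1) - 1) * (m ^ 2 - m)
          + s2 * (m ^ n * (m ^ (n + 1) - 1) - ((n : ℝ) + 1) * m ^ n * (m - 1)) := by
      intro n
      induction n with
      | zero => simp [ht0]
      | succ n ih =>
        have h1 := hb' (n + 1)
        push_cast
        linear_combination ((m - 1) * (m ^ 2 - m)) * htrec n + m * ih + (m - 1) * h1
    have hq' : ∀ n, q n * (m * (1 - m) ^ 3)
        = m * (s2 * ((1 - m ^ (2 * n + 1)) - (2 * (n : ℝ) + 1) * m ^ n * (1 - m))
            + (1 - m ^ (n + 1)) ^ 2 * (1 - m)) := by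
      intro n
      induction n with
      | zero => linear_combination (m * (1 - m) ^ 3) * hq0
      | succ n ih =>
        have h1 := hb' (n + 1)
        have h2 := ht' n
        push_cast
        linear_combination (m * (1 - m) ^ 3) * hqrec n + ih + 2 * m * (1 - m) * h2
          - (1 - m) ^ 2 * h1
    intro n
    refine mul_right_cancel₀ hF ?_
    rw [hq' n]
    field_simp

end GWaux

open MeasureTheory ProbabilityTheory

open scoped ENNReal in
/-- Second moment of the total progeny `T_R = ∑_{n=0}^{R} Z_n` of a Galton-Watson
process with offspring mean `m ≠ 1` and offspring variance `s²`. -/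
theorem total_progeny_second_moment {Ω : Type*} [MeasurableSpace Ω] (P : Measure Ω)
    [IsProbabilityMeasure P] (m s2 : ℝ) (hm1 : m ≠ 1) (R : ℕ)
    (ξ : ℕ → ℕ → Ω → ℕ) (Z : ℕ → Ω → ℕ)
    (hξmeas : ∀ n i, Measurable (ξ n i))
    (hξident : ∀ n i, Measure.map (ξ n i) P = Measure.map (ξ 0 0) P)
    (hξsq : MemLp (fun ω => (ξ 0 0 ω : ℝ)) 2 P)
    (hξmean : ∫ ω, (ξ 0 0 ω : ℝ) ∂P = m)
    (hξvar : variance (fun ω => (ξ 0 0 ω : ℝ)) P = s2)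
    (hξindep : iIndepFun (fun q : ℕ × ℕ => ξ q.1 q.2) P)
    (hZ0 : ∀ ω, Z 0 ω = 1)
    (hZrec : ∀ n ω, Z (n + 1) ω = ∑ i ∈ Finset.range (Z n ω), ξ n i ω) :
    ∫ ω, (∑ n ∈ Finset.range (R + 1), (Z n ω : ℝ)) ^ 2 ∂P
      = s2 / (1 - m) ^ 2 * ((1 - m ^ (2 * R + 1)) / (1 - m) - (2 * (R : ℝ) + 1) * m ^ R)
        + ((1 - m ^ (R + 1)) / (1 - m)) ^ 2 := by
  classical
  open GWaux in
  have hZm : ∀ k, Measurable (Z k) := gw_Zmeas_glob hξmeas hZ0 hZrec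
  set T : ℕ → Ω → ℕ := fun n ω => ∑ k ∈ Finset.range (n + 1), Z k ω with hT_def
  have hTm : ∀ n, Measurable (T n) := fun n =>
    Finset.measurable_sum _ fun k _ => hZm k
  have hTmG : ∀ n, Measurable[gwS ξ {p : ℕ × ℕ | p.1 < n}] (T n) := fun n =>
    Finset.measurable_sum _ fun k hk =>
      gw_Zmeas hξmeas hZ0 hZrec n k (Nat.lt_succ_iff.mp (Finset.mem_range.mp hk))
  have mZ : ∀ n, Measurable fun ω => ((Z n ω : ℕ) : ℝ≥0∞) := fun n =>
    measurable_from_top.comp (hZm n)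
  have mT : ∀ n, Measurable fun ω => ((T n ω : ℕ) : ℝ≥0∞) := fun n =>
    measurable_from_top.comp (hTm n)
  have mTG : ∀ n, Measurable[gwS ξ {p : ℕ × ℕ | p.1 < n}]
      fun ω => ((T n ω : ℕ) : ℝ≥0∞) := fun n => measurable_from_top.comp (hTmG n)
  have mC : ∀ n, Measurable fun ω => ((Z n ω * (Z n ω - 1) : ℕ) : ℝ≥0∞) := fun n =>
    (measurable_from_top (f := fun z : ℕ => ((z * (z - 1) : ℕ) : ℝ≥0∞))).comp (hZm n)
  -- basic real facts
  have hm0 : 0 ≤ m := hξmean ▸ integral_nonneg fun ω => Nat.cast_nonneg _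
  have hs2 : 0 ≤ s2 := hξvar ▸ variance_nonneg _ _
  have hint : Integrable (fun ω => (ξ 0 0 ω : ℝ)) P := hξsq.integrable one_le_two
  have hsqint : Integrable (fun ω => (ξ 0 0 ω : ℝ) ^ 2) P := hξsq.integrable_sq
  have hsqval : ∫ ω, (ξ 0 0 ω : ℝ) ^ 2 ∂P = s2 + m ^ 2 := by
    have hv := variance_eq_sub hξsq
    rw [hξvar, hξmean] at hv
    have heq : (fun ω => (ξ 0 0 ω : ℝ)) ^ 2 = fun ω => (ξ 0 0 ω : ℝ) ^ 2 := by
      ext ω; simp [Pi.pow_apply]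
    rw [heq] at hv
    linarith [hv]
  -- the two basic ENNReal moments
  set M := ∫⁻ ω, ((ξ 0 0 ω : ℕ) : ℝ≥0∞) ∂P with hM_def
  set Qm := ∫⁻ ω, ((ξ 0 0 ω : ℕ) : ℝ≥0∞) ^ 2 ∂P with hQ_def
  have hMval : M = ENNReal.ofReal m := by
    rw [hM_def]
    calc ∫⁻ ω, ((ξ 0 0 ω : ℕ) : ℝ≥0∞) ∂P
        = ∫⁻ ω, ENNReal.ofReal ((ξ 0 0 ω : ℝ)) ∂P :=
          lintegral_congr fun ω => (ENNReal.ofReal_natCast _).symm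
      _ = ENNReal.ofReal (∫ ω, (ξ 0 0 ω : ℝ) ∂P) :=
          (ofReal_integral_eq_lintegral_ofReal hint
            (Filter.Eventually.of_forall fun ω => Nat.cast_nonneg _)).symm
      _ = ENNReal.ofReal m := by rw [hξmean]
  have hQval : Qm = ENNReal.ofReal (s2 + m ^ 2) := by
    rw [hQ_def]
    calc ∫⁻ ω, ((ξ 0 0 ω : ℕ) : ℝ≥0∞) ^ 2 ∂P
        = ∫⁻ ω, ENNReal.ofReal ((ξ 0 0 ω : ℝ) ^ 2) ∂P := by
          refine lintegral_congr fun ω => ?_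
          rw [ENNReal.ofReal_pow (Nat.cast_nonneg _), ENNReal.ofReal_natCast]
      _ = ENNReal.ofReal (∫ ω, (ξ 0 0 ω : ℝ) ^ 2 ∂P) :=
          (ofReal_integral_eq_lintegral_ofReal hsqint
            (Filter.Eventually.of_forall fun ω => sq_nonneg _)).symm
      _ = ENNReal.ofReal (s2 + m ^ 2) := by rw [hsqval]
  have hMne : M ≠ ⊤ := by rw [hMval]; exact ENNReal.ofReal_ne_top
  have hQne : Qm ≠ ⊤ := by rw [hQval]; exact ENNReal.ofReal_ne_top
  have hMre : M.toReal = m := by rw [hMval, ENNReal.toReal_ofReal hm0]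
  have hQre : Qm.toReal = s2 + m ^ 2 := by
    rw [hQval, ENNReal.toReal_ofReal (by positivity)]
  -- first moments
  have ha : ∀ n, ∫⁻ ω, ((Z n ω : ℕ) : ℝ≥0∞) ∂P = M ^ n := by
    intro n
    induction n with
    | zero => simp [hZ0]
    | succ n ih =>
      have h := gw_step (P := P) hξmeas hξident hξindep hZ0 hZrec n
        (Y := fun _ => (1 : ℝ≥0∞)) measurable_const
      simp only [one_mul] at h
      rw [h, ih, ← hM_def, pow_succ, mul_comm]
  -- second moment recursion
  have hcab : ∀ n, (∫⁻ ω, ((Z n ω * (Z n ω - 1) : ℕ) : ℝ≥0∞) ∂P)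
      + ∫⁻ ω, ((Z n ω : ℕ) : ℝ≥0∞) ∂P = ∫⁻ ω, ((Z n ω : ℕ) : ℝ≥0∞) ^ 2 ∂P := by
    intro n
    rw [← lintegral_add_left (mC n)]
    refine lintegral_congr fun ω => ?_
    have hz : Z n ω * (Z n ω - 1) + Z n ω = Z n ω ^ 2 := by
      cases hzz : Z n ω with
      | zero => simp
      | succ k => rw [Nat.succ_sub_one]; ring
    rw [← Nat.cast_add, hz, Nat.cast_pow]
  have hb0 : ∫⁻ ω, ((Z 0 ω : ℕ) : ℝ≥0∞) ^ 2 ∂P = 1 := by simp [hZ0]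
  have hbrec : ∀ n, ∫⁻ ω, ((Z (n + 1) ω : ℕ) : ℝ≥0∞) ^ 2 ∂P
      = Qm * M ^ n + M ^ 2 * ∫⁻ ω, ((Z n ω * (Z n ω - 1) : ℕ) : ℝ≥0∞) ∂P := by
    intro n
    rw [gw_sqstep (P := P) hξmeas hξident hξindep hZ0 hZrec n, ha n, ← hM_def, ← hQ_def]
  have hcleb : ∀ n, (∫⁻ ω, ((Z n ω * (Z n ω - 1) : ℕ) : ℝ≥0∞) ∂P)
      ≤ ∫⁻ ω, ((Z n ω : ℕ) : ℝ≥0∞) ^ 2 ∂P := by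
    intro n
    refine lintegral_mono fun ω => ?_
    calc ((Z n ω * (Z n ω - 1) : ℕ) : ℝ≥0∞)
        ≤ ((Z n ω * Z n ω : ℕ) : ℝ≥0∞) :=
          Nat.cast_le.mpr (Nat.mul_le_mul_left _ (Nat.sub_le _ _))
      _ = ((Z n ω : ℕ) : ℝ≥0∞) ^ 2 := by push_cast; ring
  have hbfin : ∀ n, (∫⁻ ω, ((Z n ω : ℕ) : ℝ≥0∞) ^ 2 ∂P) ≠ ⊤ := by
    intro n
    induction n with
    | zero => rw [hb0]; exact ENNReal.one_ne_top
    | succ n ih =>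
      rw [hbrec n]
      exact ENNReal.add_ne_top.mpr
        ⟨ENNReal.mul_ne_top hQne (ENNReal.pow_ne_top hMne),
         ENNReal.mul_ne_top (ENNReal.pow_ne_top hMne) (ne_top_of_le_ne_top ih (hcleb n))⟩
  have hcfin : ∀ n, (∫⁻ ω, ((Z n ω * (Z n ω - 1) : ℕ) : ℝ≥0∞) ∂P) ≠ ⊤ :=
    fun n => ne_top_of_le_ne_top (hbfin n) (hcleb n)
  -- t recursion
  have hTsplit : ∀ n ω, ((T (n + 1) ω : ℕ) : ℝ≥0∞)
      = ((T n ω : ℕ) : ℝ≥0∞) + ((Z (n + 1) ω : ℕ) : ℝ≥0∞) := by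
    intro n ω
    rw [hT_def]
    simp only [Finset.sum_range_succ]
    push_cast
    ring
  have ht0 : ∫⁻ ω, ((T 0 ω : ℕ) : ℝ≥0∞) * ((Z 0 ω : ℕ) : ℝ≥0∞) ∂P = 1 := by
    have h : ∀ ω, T 0 ω = 1 := fun ω => by simp [hT_def, hZ0]
    simp [h, hZ0]
  have htrec : ∀ n, ∫⁻ ω, ((T (n + 1) ω : ℕ) : ℝ≥0∞) * ((Z (n + 1) ω : ℕ) : ℝ≥0∞) ∂P
      = M * (∫⁻ ω, ((T n ω : ℕ) : ℝ≥0∞) * ((Z n ω : ℕ) : ℝ≥0∞) ∂P)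
        + ∫⁻ ω, ((Z (n + 1) ω : ℕ) : ℝ≥0∞) ^ 2 ∂P := by
    intro n
    calc ∫⁻ ω, ((T (n + 1) ω : ℕ) : ℝ≥0∞) * ((Z (n + 1) ω : ℕ) : ℝ≥0∞) ∂P
        = ∫⁻ ω, (((T n ω : ℕ) : ℝ≥0∞) * ((Z (n + 1) ω : ℕ) : ℝ≥0∞)
            + ((Z (n + 1) ω : ℕ) : ℝ≥0∞) ^ 2) ∂P := by
          refine lintegral_congr fun ω => ?_
          rw [hTsplit n ω]; ring
      _ = (∫⁻ ω, ((T n ω : ℕ) : ℝ≥0∞) * ((Z (n + 1) ω : ℕ) : ℝ≥0∞) ∂P)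
            + ∫⁻ ω, ((Z (n + 1) ω : ℕ) : ℝ≥0∞) ^ 2 ∂P :=
          lintegral_add_left ((mT n).mul (mZ (n + 1))) _
      _ = M * (∫⁻ ω, ((T n ω : ℕ) : ℝ≥0∞) * ((Z n ω : ℕ) : ℝ≥0∞) ∂P)
            + ∫⁻ ω, ((Z (n + 1) ω : ℕ) : ℝ≥0∞) ^ 2 ∂P := by
          rw [gw_step (P := P) hξmeas hξident hξindep hZ0 hZrec n
            (Y := fun ω => ((T n ω : ℕ) : ℝ≥0∞)) (mTG n), ← hM_def]
  -- q recursion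
  have hq0 : ∫⁻ ω, ((T 0 ω : ℕ) : ℝ≥0∞) ^ 2 ∂P = 1 := by
    have h : ∀ ω, T 0 ω = 1 := fun ω => by simp [hT_def, hZ0]
    simp [h]
  have hqrec : ∀ n, ∫⁻ ω, ((T (n + 1) ω : ℕ) : ℝ≥0∞) ^ 2 ∂P
      = (∫⁻ ω, ((T n ω : ℕ) : ℝ≥0∞) ^ 2 ∂P)
        + 2 * (M * ∫⁻ ω, ((T n ω : ℕ) : ℝ≥0∞) * ((Z n ω : ℕ) : ℝ≥0∞) ∂P)
        + ∫⁻ ω, ((Z (n + 1) ω : ℕ) : ℝ≥0∞) ^ 2 ∂P := by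
    intro n
    calc ∫⁻ ω, ((T (n + 1) ω : ℕ) : ℝ≥0∞) ^ 2 ∂P
        = ∫⁻ ω, (((T n ω : ℕ) : ℝ≥0∞) ^ 2
            + (2 * (((T n ω : ℕ) : ℝ≥0∞) * ((Z (n + 1) ω : ℕ) : ℝ≥0∞))
              + ((Z (n + 1) ω : ℕ) : ℝ≥0∞) ^ 2)) ∂P := by
          refine lintegral_congr fun ω => ?_
          rw [hTsplit n ω]; ring
      _ = (∫⁻ ω, ((T n ω : ℕ) : ℝ≥0∞) ^ 2 ∂P)
            + ∫⁻ ω, (2 * (((T n ω : ℕ) : ℝ≥0∞) * ((Z (n + 1) ω : ℕ) : ℝ≥0∞))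
              + ((Z (n + 1) ω : ℕ) : ℝ≥0∞) ^ 2) ∂P :=
          lintegral_add_left ((mT n).pow_const 2) _
      _ = (∫⁻ ω, ((T n ω : ℕ) : ℝ≥0∞) ^ 2 ∂P)
            + ((∫⁻ ω, 2 * (((T n ω : ℕ) : ℝ≥0∞) * ((Z (n + 1) ω : ℕ) : ℝ≥0∞)) ∂P)
              + ∫⁻ ω, ((Z (n + 1) ω : ℕ) : ℝ≥0∞) ^ 2 ∂P) := by
          rw [lintegral_add_left (f := fun ω => 2 * (((T n ω : ℕ) : ℝ≥0∞) * ((Z (n + 1) ω : ℕ) : ℝ≥0∞))) (measurable_const.mul ((mT n).mul (mZ (n + 1)))) _]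
      _ = (∫⁻ ω, ((T n ω : ℕ) : ℝ≥0∞) ^ 2 ∂P)
            + 2 * (M * ∫⁻ ω, ((T n ω : ℕ) : ℝ≥0∞) * ((Z n ω : ℕ) : ℝ≥0∞) ∂P)
            + ∫⁻ ω, ((Z (n + 1) ω : ℕ) : ℝ≥0∞) ^ 2 ∂P := by
          rw [lintegral_const_mul 2 (f := fun ω => ((T n ω : ℕ) : ℝ≥0∞) * ((Z (n + 1) ω : ℕ) : ℝ≥0∞)) ((mT n).mul (mZ (n + 1))),
            gw_step (P := P) hξmeas hξident hξindep hZ0 hZrec n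
              (Y := fun ω => ((T n ω : ℕ) : ℝ≥0∞)) (mTG n),
            ← hM_def, add_assoc]
  -- finiteness of t and q
  have htleq : ∀ n, (∫⁻ ω, ((T n ω : ℕ) : ℝ≥0∞) * ((Z n ω : ℕ) : ℝ≥0∞) ∂P)
      ≤ ∫⁻ ω, ((T n ω : ℕ) : ℝ≥0∞) ^ 2 ∂P := by
    intro n
    refine lintegral_mono fun ω => ?_
    have hZT : Z n ω ≤ T n ω := by
      rw [hT_def]
      exact Finset.single_le_sum (f := fun k => Z k ω) (fun k _ => Nat.zero_le _)
        (Finset.self_mem_range_succ n)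
    calc ((T n ω : ℕ) : ℝ≥0∞) * ((Z n ω : ℕ) : ℝ≥0∞)
        ≤ ((T n ω : ℕ) : ℝ≥0∞) * ((T n ω : ℕ) : ℝ≥0∞) :=
          mul_le_mul_right (Nat.cast_le.mpr hZT) _
      _ = ((T n ω : ℕ) : ℝ≥0∞) ^ 2 := (sq _).symm
  have hqfin : ∀ n, (∫⁻ ω, ((T n ω : ℕ) : ℝ≥0∞) ^ 2 ∂P) ≠ ⊤ := by
    intro n
    induction n with
    | zero => rw [hq0]; exact ENNReal.one_ne_top
    | succ n ih =>
      rw [hqrec n]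
      exact ENNReal.add_ne_top.mpr
        ⟨ENNReal.add_ne_top.mpr ⟨ih, ENNReal.mul_ne_top (by simp)
          (ENNReal.mul_ne_top hMne (ne_top_of_le_ne_top ih (htleq n)))⟩,
         hbfin (n + 1)⟩
  have htfin : ∀ n, (∫⁻ ω, ((T n ω : ℕ) : ℝ≥0∞) * ((Z n ω : ℕ) : ℝ≥0∞) ∂P) ≠ ⊤ :=
    fun n => ne_top_of_le_ne_top (hqfin n) (htleq n)
  -- degenerate case hypothesis for the algebra lemma
  have hs2m : m = 0 → s2 = 0 := by
    intro h0
    have hM0 : M = 0 := by rw [hMval, h0, ENNReal.ofReal_zero]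
    have mxi : Measurable fun ω => ((ξ 0 0 ω : ℕ) : ℝ≥0∞) :=
      measurable_from_top.comp (hξmeas 0 0)
    have hae : (fun ω => ((ξ 0 0 ω : ℕ) : ℝ≥0∞)) =ᵐ[P] 0 :=
      (lintegral_eq_zero_iff mxi).mp (hM_def ▸ hM0)
    have hQ0 : Qm = 0 := by
      rw [hQ_def, lintegral_eq_zero_iff ((mxi).pow_const 2)]
      filter_upwards [hae] with ω hω
      simp only [Pi.zero_apply] at hω ⊢
      simp [hω]
    rw [hQval] at hQ0
    have h := ENNReal.ofReal_eq_zero.mp hQ0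
    nlinarith [hs2]
  -- real recursions
  have hcre : ∀ n, (∫⁻ ω, ((Z n ω * (Z n ω - 1) : ℕ) : ℝ≥0∞) ∂P).toReal
      = (∫⁻ ω, ((Z n ω : ℕ) : ℝ≥0∞) ^ 2 ∂P).toReal - m ^ n := by
    intro n
    have h := congrArg ENNReal.toReal (hcab n)
    rw [ENNReal.toReal_add (hcfin n) (by rw [ha n]; exact ENNReal.pow_ne_top hMne),
      ha n, ENNReal.toReal_pow, hMre] at h
    linarith [h]
  have hbrec' : ∀ n, (∫⁻ ω, ((Z (n + 1) ω : ℕ) : ℝ≥0∞) ^ 2 ∂P).toReal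
      = m ^ 2 * (∫⁻ ω, ((Z n ω : ℕ) : ℝ≥0∞) ^ 2 ∂P).toReal + s2 * m ^ n := by
    intro n
    rw [hbrec n, ENNReal.toReal_add (ENNReal.mul_ne_top hQne (ENNReal.pow_ne_top hMne))
        (ENNReal.mul_ne_top (ENNReal.pow_ne_top hMne) (hcfin n)),
      ENNReal.toReal_mul, ENNReal.toReal_mul, ENNReal.toReal_pow, ENNReal.toReal_pow,
      hMre, hQre, hcre n]
    ring
  have htrec' : ∀ n, (∫⁻ ω, ((T (n + 1) ω : ℕ) : ℝ≥0∞) * ((Z (n + 1) ω : ℕ) : ℝ≥0∞) ∂P).toReal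
      = m * (∫⁻ ω, ((T n ω : ℕ) : ℝ≥0∞) * ((Z n ω : ℕ) : ℝ≥0∞) ∂P).toReal
        + (∫⁻ ω, ((Z (n + 1) ω : ℕ) : ℝ≥0∞) ^ 2 ∂P).toReal := by
    intro n
    rw [htrec n, ENNReal.toReal_add (ENNReal.mul_ne_top hMne (htfin n)) (hbfin (n + 1)),
      ENNReal.toReal_mul, hMre]
  have hqrec' : ∀ n, (∫⁻ ω, ((T (n + 1) ω : ℕ) : ℝ≥0∞) ^ 2 ∂P).toReal
      = (∫⁻ ω, ((T n ω : ℕ) : ℝ≥0∞) ^ 2 ∂P).toReal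
        + 2 * m * (∫⁻ ω, ((T n ω : ℕ) : ℝ≥0∞) * ((Z n ω : ℕ) : ℝ≥0∞) ∂P).toReal
        + (∫⁻ ω, ((Z (n + 1) ω : ℕ) : ℝ≥0∞) ^ 2 ∂P).toReal := by
    intro n
    rw [hqrec n, ENNReal.toReal_add (ENNReal.add_ne_top.mpr
        ⟨hqfin n, ENNReal.mul_ne_top (by simp) (ENNReal.mul_ne_top hMne (htfin n))⟩)
        (hbfin (n + 1)),
      ENNReal.toReal_add (hqfin n)
        (ENNReal.mul_ne_top (by simp) (ENNReal.mul_ne_top hMne (htfin n))),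
      ENNReal.toReal_mul, ENNReal.toReal_mul, hMre]
    norm_num
    ring
  -- apply the algebra lemma
  have key := gw_algebra m s2 hm1 hs2m
    (fun n => (∫⁻ ω, ((Z n ω : ℕ) : ℝ≥0∞) ^ 2 ∂P).toReal)
    (fun n => (∫⁻ ω, ((T n ω : ℕ) : ℝ≥0∞) * ((Z n ω : ℕ) : ℝ≥0∞) ∂P).toReal)
    (fun n => (∫⁻ ω, ((T n ω : ℕ) : ℝ≥0∞) ^ 2 ∂P).toReal)
    (by simpa using congrArg ENNReal.toReal hb0)
    (by simpa using congrArg ENNReal.toReal ht0)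
    (by simpa using congrArg ENNReal.toReal hq0)
    hbrec' htrec' hqrec' R
  -- identify the LHS with the ENNReal quantity
  have hLHS : ∫ ω, (∑ n ∈ Finset.range (R + 1), (Z n ω : ℝ)) ^ 2 ∂P
      = (∫⁻ ω, ((T R ω : ℕ) : ℝ≥0∞) ^ 2 ∂P).toReal := by
    rw [← integral_toReal ((mT R).pow_const 2).aemeasurable
      (Filter.Eventually.of_forall fun ω => by
        exact ENNReal.pow_lt_top (ENNReal.natCast_lt_top _))]
    refine integral_congr_ae (Filter.Eventually.of_forall fun ω => ?_)
    beta_reduce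
    have h1 : (((T R ω : ℕ) : ℝ≥0∞) ^ 2).toReal = ((T R ω : ℕ) : ℝ) ^ 2 := by
      rw [ENNReal.toReal_pow, ENNReal.toReal_natCast]
    rw [h1, hT_def]
    push_cast
    ring
  rw [hLHS]
  exact key
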